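/- arXiv:2304.00005 — 5 statements merged into one kernel-verified Lean document; each statement's English description precedes it below -/
import Mathlib

section
/- In a lattice L, if A and B are blocks of a compatible tolerance T, then the sets {a ∨ b : a ∈ A, b ∈ B} and {a ∧ b : a ∈ A, b ∈ B} are pre-blocks of T. -/
def IsPreblock {S : Type*} (T : S → S → Prop) (K : Set S) : Prop :=
  ∀ a ∈ K, ∀ b ∈ K, T a b

def IsBlock {S : Type*} (T : S → S → Prop) (B : Set S) : Prop :=
  IsPreblock T B ∧ ∀ K : Set S, IsPreblock T K → B ⊆ K → K = B

/-- A tolerance on a lattice is compatible if it is preserved by `⊔` and `⊓`. -/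
def Compatible {L : Type*} [Lattice L] (T : L → L → Prop) : Prop :=
  ∀ a₁ b₁ a₂ b₂ : L, T a₁ b₁ → T a₂ b₂ →
    T (a₁ ⊔ a₂) (b₁ ⊔ b₂) ∧ T (a₁ ⊓ a₂) (b₁ ⊓ b₂)

theorem sup_inf_of_blocks_are_preblocks {L : Type*} [Lattice L]
    (T : L → L → Prop) (hr : Reflexive T) (hs : Symmetric T)
    (hc : Compatible T) (A B : Set L) (hA : IsBlock T A) (hB : IsBlock T B) :
    IsPreblock T {x : L | ∃ a ∈ A, ∃ b ∈ B, x = a ⊔ b} ∧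
    IsPreblock T {x : L | ∃ a ∈ A, ∃ b ∈ B, x = a ⊓ b} := by
  constructor
  · rintro x ⟨a₁, ha₁, b₁, hb₁, rfl⟩ y ⟨a₂, ha₂, b₂, hb₂, rfl⟩
    exact (hc a₁ a₂ b₁ b₂ (hA.1 a₁ ha₁ a₂ ha₂) (hB.1 b₁ hb₁ b₂ hb₂)).1
  · rintro x ⟨a₁, ha₁, b₁, hb₁, rfl⟩ y ⟨a₂, ha₂, b₂, hb₂, rfl⟩
    exact (hc a₁ a₂ b₁ b₂ (hA.1 a₁ ha₁ a₂ ha₂) (hB.1 b₁ hb₁ b₂ hb₂)).2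
end

section
/- Every block of a compatible tolerance on a lattice is a convex sublattice: if x, b lie in a block Z and x ≤ a ≤ b, then a ∈ Z; moreover Z is closed under ∨ and ∧. -/
lemma mem_of_rel_all {S : Type*} (T : S → S → Prop) (hr : Reflexive T) (hs : Symmetric T)
    (Z : Set S) (hZ : IsBlock T Z) (a : S) (h : ∀ z ∈ Z, T a z) : a ∈ Z := by
  have hK : IsPreblock T (insert a Z) := by
    rintro x (rfl | hx) y (rfl | hy)
    · exact hr _
    · exact h y hy
    · exact hs (h x hx)
    · exact hZ.1 x hx y hy
  have := hZ.2 _ hK (Set.subset_insert a Z)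
  rw [← this]; exact Set.mem_insert a Z

/-- Every block of a compatible tolerance on a lattice is a convex sublattice. -/
theorem block_is_convex_sublattice {L : Type*} [Lattice L]
    (T : L → L → Prop) (hr : Reflexive T) (hs : Symmetric T)
    (hc : Compatible T) (Z : Set L) (hZ : IsBlock T Z) :
    (∀ x a b : L, x ∈ Z → b ∈ Z → x ≤ a → a ≤ b → a ∈ Z) ∧
    (∀ x y : L, x ∈ Z → y ∈ Z → x ⊔ y ∈ Z ∧ x ⊓ y ∈ Z) := by
  constructor
  · intro x a b hx hb hxa hab
    apply mem_of_rel_all T hr hs Z hZ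
    intro z hz
    have h1 : T (a ⊔ x) (a ⊔ z) := (hc a a x z (hr a) (hZ.1 x hx z hz)).1
    rw [sup_eq_left.mpr hxa] at h1
    -- h1 : T a (a ⊔ z)
    have h2 : T (a ⊓ b) ((a ⊔ z) ⊓ z) := (hc a (a ⊔ z) b z (h1) (hZ.1 b hb z hz)).2
    rw [inf_eq_left.mpr hab] at h2; simpa using h2
  · intro x y hx hy
    constructor
    · apply mem_of_rel_all T hr hs Z hZ
      intro z hz
      have := (hc x z y z (hZ.1 x hx z hz) (hZ.1 y hy z hz)).1
      rwa [sup_idem] at this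
    · apply mem_of_rel_all T hr hs Z hZ
      intro z hz
      have := (hc x z y z (hZ.1 x hx z hz) (hZ.1 y hy z hz)).2
      rwa [inf_idem] at this
end

section
/- Blocks of a compatible tolerance on a finite lattice L are intervals: for each block B there exist a ≤ b in L with B = [a,b], where a = ⋀B and b = ⋁B. -/
/-- Blocks of a compatible tolerance on a finite lattice are intervals
`B = [a, b]` with `a = ⋀ B` (the greatest lower bound of `B`) and
`b = ⋁ B` (the least upper bound of `B`). -/
theorem block_is_interval {L : Type*} [Lattice L] [Fintype L] [Nonempty L]
    (T : L → L → Prop) (hr : Reflexive T) (hs : Symmetric T)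
    (hc : Compatible T) (B : Set L) (hB : IsBlock T B) :
    ∃ a b : L, a ≤ b ∧ B = Set.Icc a b ∧ IsGLB B a ∧ IsLUB B b := by
  classical
  obtain ⟨hpre, hmax⟩ := hB
  -- B is nonempty
  have hBne : B.Nonempty := by
    by_contra h
    rw [Set.not_nonempty_iff_eq_empty] at h
    have z : L := Classical.arbitrary L
    have hz : ({z} : Set L) = B := by
      apply hmax
      · intro u hu v hv
        simp only [Set.mem_singleton_iff] at hu hv
        subst hu; subst hv; exact hr _
      · rw [h]; exact Set.empty_subset _
    rw [h] at hz
    exact absurd hz (by simp)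
  have hfin : B.Finite := Set.toFinite B
  have hmem : ∀ x, x ∈ hfin.toFinset ↔ x ∈ B := fun x => hfin.mem_toFinset
  have hsne : hfin.toFinset.Nonempty := by
    rwa [Set.Finite.toFinset_nonempty]
  set b : L := hfin.toFinset.sup' hsne id with hbdef
  set a : L := hfin.toFinset.inf' hsne id with hadef
  -- every element of B is below b and above a
  have hleb : ∀ y ∈ B, y ≤ b := fun y hy =>
    Finset.le_sup' (f := id) ((hmem y).2 hy)
  have hage : ∀ y ∈ B, a ≤ y := fun y hy =>
    Finset.inf'_le (f := id) ((hmem y).2 hy)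
  -- every element of B is T-related to b and to a
  have hTb : ∀ y ∈ B, T y b := by
    intro y hy
    apply Finset.sup'_induction (p := fun z => T y z)
    · intro u h1 v h2
      have := (hc y u y v h1 h2).1
      simpa using this
    · intro z hz; exact hpre y hy z ((hmem z).1 hz)
  have hTa : ∀ y ∈ B, T a y := by
    intro y hy
    apply Finset.inf'_induction (p := fun z => T z y)
    · intro u h1 v h2
      have := (hc u y v y h1 h2).2
      simpa using this
    · intro z hz; exact hpre z ((hmem z).1 hz) y hy
  have hTab : T a b := by
    apply Finset.inf'_induction (p := fun z => T z b)
    · intro u h1 v h2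
      have := (hc u b v b h1 h2).2
      simpa using this
    · intro z hz; exact hTb z ((hmem z).1 hz)
  -- b ∈ B and a ∈ B by maximality
  have hbB : b ∈ B := by
    have : insert b B = B := by
      apply hmax
      · intro u hu v hv
        rcases hu with rfl | hu <;> rcases hv with rfl | hv
        · exact hr _
        · exact hs (hTb v hv)
        · exact hTb u hu
        · exact hpre u hu v hv
      · exact Set.subset_insert _ _
    rw [← this]; exact Set.mem_insert _ _
  have haB : a ∈ B := by
    have : insert a B = B := by
      apply hmax
      · intro u hu v hv
        rcases hu with rfl | hu <;> rcases hv with rfl | hv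
        · exact hr _
        · exact hTa v hv
        · exact hs (hTa u hu)
        · exact hpre u hu v hv
      · exact Set.subset_insert _ _
    rw [← this]; exact Set.mem_insert _ _
  obtain ⟨y0, hy0⟩ := hBne
  have hab : a ≤ b := le_trans (hage y0 hy0) (hleb y0 hy0)
  -- the interval [a,b] is contained in B
  have hIcc : Set.Icc a b ⊆ B := by
    intro x hx
    obtain ⟨hax, hxb⟩ := hx
    -- T b x
    have hTbx : T b x := by
      have := (hc a b x x hTab (hr x)).1
      rw [sup_eq_right.2 hax, sup_eq_left.2 hxb] at this
      exact hs this
    -- T x y for each y ∈ B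
    have hTxy : ∀ y ∈ B, T x y := by
      intro y hy
      have h1 : T x (x ⊓ y) := by
        have := (hc b y x x (hs (hTb y hy)) (hr x)).2
        rw [inf_eq_right.2 hxb] at this
        simpa [inf_comm] using this
      have h2 : T (x ⊓ y) y := by
        have := (hc b x y y hTbx (hr y)).2
        rw [inf_eq_right.2 (hleb y hy)] at this
        exact hs this
      have := (hc x (x ⊓ y) (x ⊓ y) y h1 h2).1
      simpa [sup_inf_self, sup_comm, inf_comm] using this
    have : insert x B = B := by
      apply hmax
      · intro u hu v hv
        rcases hu with rfl | hu <;> rcases hv with rfl | hv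
        · exact hr _
        · exact hTxy v hv
        · exact hs (hTxy u hu)
        · exact hpre u hu v hv
      · exact Set.subset_insert _ _
    rw [← this]; exact Set.mem_insert _ _
  refine ⟨a, b, hab, ?_, ?_, ?_⟩
  · exact Set.Subset.antisymm (fun y hy => ⟨hage y hy, hleb y hy⟩) hIcc
  · exact ⟨fun y hy => hage y hy, fun c hc' => hc' haB⟩
  · exact ⟨fun y hy => hleb y hy, fun c hc' => hc' hbB⟩
end

section
/- If the blocks of a compatible tolerance on a finite lattice L are {[aᵢ,bᵢ] : i ∈ I}, then for all i, j ∈ I there exists k ∈ I with a_k = aᵢ ∨ aⱼ and bᵢ ∨ bⱼ ≤ b_k. -/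
/-- An interval whose endpoints are tolerance-related is a preblock. -/
theorem icc_preblock {L : Type*} [Lattice L] {T : L → L → Prop}
    (hr : Reflexive T) (hs : Symmetric T) (hc : Compatible T)
    {a b : L} (hab : T a b) : IsPreblock T (Set.Icc a b) := by
  have key : ∀ u ∈ Set.Icc a b, T u b := by
    intro u hu
    have h := (hc a b u u hab (hr u)).1
    rwa [sup_eq_right.mpr hu.1, sup_eq_left.mpr hu.2] at h
  intro u hu v hv
  have hub : T u b := key u hu
  have hbv : T b v := hs (key v hv)
  have h := (hc u b b v hub hbv).2
  rwa [inf_eq_left.mpr hu.2, inf_eq_right.mpr hv.2] at h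

/-- If `[a₁,b₁]` and `[a₂,b₂]` are blocks of a compatible tolerance on a finite
lattice, then there is a block `[a₃,b₃]` with `a₃ = a₁ ⊔ a₂` and `b₁ ⊔ b₂ ≤ b₃`. -/
theorem blocks_sup_condition {L : Type*} [Lattice L] [Fintype L]
    (T : L → L → Prop) (hr : Reflexive T) (hs : Symmetric T)
    (hc : Compatible T) (a₁ b₁ a₂ b₂ : L) (h₁ : a₁ ≤ b₁) (h₂ : a₂ ≤ b₂)
    (hB₁ : IsBlock T (Set.Icc a₁ b₁)) (hB₂ : IsBlock T (Set.Icc a₂ b₂)) :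
    ∃ a₃ b₃ : L, a₃ = a₁ ⊔ a₂ ∧ b₁ ⊔ b₂ ≤ b₃ ∧
      IsBlock T (Set.Icc a₃ b₃) := by
  classical
  have hT1 : T a₁ b₁ := hB₁.1 a₁ ⟨le_refl _, h₁⟩ b₁ ⟨h₁, le_refl _⟩
  have hT2 : T a₂ b₂ := hB₂.1 a₂ ⟨le_refl _, h₂⟩ b₂ ⟨h₂, le_refl _⟩
  set a : L := a₁ ⊔ a₂ with ha
  set c : L := b₁ ⊔ b₂ with hcdef
  have hac : a ≤ c := sup_le_sup h₁ h₂
  have hTac : T a c := (hc a₁ b₁ a₂ b₂ hT1 hT2).1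
  -- a maximal preblock containing Icc a c
  obtain ⟨B, hBmem, hBmax⟩ :
      ∃ B ∈ (Finset.univ.filter
          (fun K : Set L => IsPreblock T K ∧ Set.Icc a c ⊆ K)),
        ∀ K ∈ (Finset.univ.filter
          (fun K : Set L => IsPreblock T K ∧ Set.Icc a c ⊆ K)), ¬ B < K := by
    suffices hS : ∃ i, Maximal (fun x => x ∈ Finset.univ.filter
        (fun K : Set L => IsPreblock T K ∧ Set.Icc a c ⊆ K)) i by
      obtain ⟨m, hm⟩ := hS
      exact ⟨m, hm.prop, fun K hK hlt => hlt.not_ge (hm.2 hK hlt.le)⟩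
    apply Finset.exists_maximal
    exact ⟨Set.Icc a c, by
      simp only [Finset.mem_filter, Finset.mem_univ, true_and]
      exact ⟨icc_preblock hr hs hc hTac, le_refl _⟩⟩
  simp only [Finset.mem_filter, Finset.mem_univ, true_and] at hBmem
  obtain ⟨hBpre, hBsub⟩ := hBmem
  have hBblock : ∀ K : Set L, IsPreblock T K → B ⊆ K → K = B := by
    intro K hK hBK
    by_contra hne
    exact hBmax K (by
      simp only [Finset.mem_filter, Finset.mem_univ, true_and]
      exact ⟨hK, hBsub.trans hBK⟩) (lt_of_le_of_ne hBK (Ne.symm hne))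
  have haB : a ∈ B := hBsub ⟨le_refl _, hac⟩
  have hcB : c ∈ B := hBsub ⟨hac, le_refl _⟩
  set s : Finset L := B.toFinset with hsdef
  have hne : s.Nonempty := ⟨a, Set.mem_toFinset.mpr haB⟩
  set a₃ : L := s.inf' hne id with ha₃
  set b₃ : L := s.sup' hne id with hb₃
  -- T a₃ b₃
  have key1 : ∀ y ∈ B, T a₃ y := by
    intro y hy
    refine Finset.inf'_induction (p := fun z => T z y) hne id ?_ ?_
    · intro z₁ hz₁ z₂ hz₂
      have h := (hc z₁ y z₂ y hz₁ hz₂).2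
      rwa [inf_idem] at h
    · intro x hx
      exact hBpre x (Set.mem_toFinset.mp hx) y hy
  have hT3 : T a₃ b₃ := by
    refine Finset.sup'_induction (p := fun w => T a₃ w) hne id ?_ ?_
    · intro w₁ hw₁ w₂ hw₂
      have h := (hc a₃ w₁ a₃ w₂ hw₁ hw₂).1
      rwa [sup_idem] at h
    · intro x hx
      exact key1 x (Set.mem_toFinset.mp hx)
  have hsub : B ⊆ Set.Icc a₃ b₃ := by
    intro x hx
    exact ⟨Finset.inf'_le id (Set.mem_toFinset.mpr hx),
      Finset.le_sup' id (Set.mem_toFinset.mpr hx)⟩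
  have hEq : Set.Icc a₃ b₃ = B := hBblock _ (icc_preblock hr hs hc hT3) hsub
  -- every element of B is above a = a₁ ⊔ a₂
  have hkey : ∀ x ∈ B, a ≤ x := by
    intro x hx
    have step : ∀ (p q : L), p ≤ q → q ≤ c → T p q →
        (∀ K : Set L, IsPreblock T K → Set.Icc p q ⊆ K → K = Set.Icc p q) →
        p ≤ x := by
      intro p q hpq hqc hTpq hmax
      have hxc : T x c := hBpre x hx c hcB
      have h1 : T (x ⊓ q) q := by
        have h := (hc x c q q hxc (hr q)).2
        rwa [inf_eq_right.mpr hqc] at h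
      have h2 : T (x ⊓ p) q := by
        have h := (hc (x ⊓ q) q p q h1 hTpq).2
        rwa [inf_idem, inf_assoc, inf_eq_right.mpr hpq] at h
      have hKeq : Set.Icc (x ⊓ p) q = Set.Icc p q :=
        hmax _ (icc_preblock hr hs hc h2)
          (Set.Icc_subset_Icc inf_le_right le_rfl)
      have hmem : x ⊓ p ∈ Set.Icc p q := by
        rw [← hKeq]
        exact ⟨le_refl _, le_trans inf_le_right hpq⟩
      exact le_trans hmem.1 inf_le_left
    exact sup_le (step a₁ b₁ h₁ le_sup_left hT1 hB₁.2)
      (step a₂ b₂ h₂ le_sup_right hT2 hB₂.2)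
  have h_a3 : a₃ = a :=
    le_antisymm (Finset.inf'_le id (Set.mem_toFinset.mpr haB))
      (Finset.le_inf' hne id fun x hx => hkey x (Set.mem_toFinset.mp hx))
  have h_b3 : c ≤ b₃ := Finset.le_sup' id (Set.mem_toFinset.mpr hcB)
  refine ⟨a₃, b₃, h_a3, h_b3, ?_⟩
  rw [hEq]
  exact ⟨hBpre, hBblock⟩
end

section
/- For blocks C and E of a compatible tolerance on a finite lattice, the lattice ideal generated by C equals the ideal generated by E if and only if the lattice filter generated by C equals the filter generated by E. -/
/-- Two blocks sharing a common top element are equal. -/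
lemma block_eq_of_shared_top {L : Type*} [Lattice L] {T : L → L → Prop}
    (hc : Compatible T) {C E : Set L} (hC : IsBlock T C) (hE : IsBlock T E)
    {m : L} (hmC : m ∈ C) (hmE : m ∈ E)
    (hCm : ∀ x ∈ C, x ≤ m) (hEm : ∀ y ∈ E, y ≤ m) : C = E := by
  have hpre : IsPreblock T (C ∪ E) := by
    intro a ha b hb
    rcases ha with ha | ha <;> rcases hb with hb | hb
    · exact hC.1 a ha b hb
    · have := (hc a m m b (hC.1 a ha m hmC) (hE.1 m hmE b hb)).2
      simpa [inf_eq_left.mpr (hCm a ha), inf_eq_right.mpr (hEm b hb)] using this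
    · have := (hc a m m b (hE.1 a ha m hmE) (hC.1 m hmC b hb)).2
      simpa [inf_eq_left.mpr (hEm a ha), inf_eq_right.mpr (hCm b hb)] using this
    · exact hE.1 a ha b hb
  have h1 := hC.2 (C ∪ E) hpre Set.subset_union_left
  have h2 := hE.2 (C ∪ E) hpre Set.subset_union_right
  exact h1.symm.trans h2

/-- Two blocks sharing a common bottom element are equal. -/
lemma block_eq_of_shared_bot {L : Type*} [Lattice L] {T : L → L → Prop}
    (hc : Compatible T) {C E : Set L} (hC : IsBlock T C) (hE : IsBlock T E)
    {m : L} (hmC : m ∈ C) (hmE : m ∈ E)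
    (hCm : ∀ x ∈ C, m ≤ x) (hEm : ∀ y ∈ E, m ≤ y) : C = E := by
  have hpre : IsPreblock T (C ∪ E) := by
    intro a ha b hb
    rcases ha with ha | ha <;> rcases hb with hb | hb
    · exact hC.1 a ha b hb
    · have := (hc a m m b (hC.1 a ha m hmC) (hE.1 m hmE b hb)).1
      simpa [sup_eq_left.mpr (hCm a ha), sup_eq_right.mpr (hEm b hb)] using this
    · have := (hc a m m b (hE.1 a ha m hmE) (hC.1 m hmC b hb)).1
      simpa [sup_eq_left.mpr (hEm a ha), sup_eq_right.mpr (hCm b hb)] using this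
    · exact hE.1 a ha b hb
  have h1 := hC.2 (C ∪ E) hpre Set.subset_union_left
  have h2 := hE.2 (C ∪ E) hpre Set.subset_union_right
  exact h1.symm.trans h2

/-- For blocks `C` and `E` of a compatible tolerance on a finite lattice (which
are intervals, whence the lattice ideal generated by a block is `↓(max)` and
the filter generated is `↑(min)`): the ideal generated by `C` equals the one
generated by `E` iff the filter generated by `C` equals the one generated by `E`. -/
theorem block_ideal_iff_filter {L : Type*} [Lattice L] [Fintype L]
    (T : L → L → Prop) (hr : Reflexive T) (hs : Symmetric T)
    (hc : Compatible T) (C E : Set L) (hC : IsBlock T C) (hE : IsBlock T E)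
    (cMin cMax eMin eMax : L)
    (hc₁ : IsLeast C cMin) (hc₂ : IsGreatest C cMax)
    (he₁ : IsLeast E eMin) (he₂ : IsGreatest E eMax) :
    Set.Iic cMax = Set.Iic eMax ↔ Set.Ici cMin = Set.Ici eMin := by
  constructor
  · intro h
    have hm : cMax = eMax := Set.Iic_inj.mp h
    have hCE : C = E := block_eq_of_shared_top hc hC hE hc₂.1 (hm ▸ he₂.1)
      (fun x hx => hc₂.2 hx) (fun y hy => hm ▸ he₂.2 hy)
    have : cMin = eMin := hc₁.unique (hCE ▸ he₁)
    rw [this]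
  · intro h
    have hm : cMin = eMin := Set.Ici_inj.mp h
    have hCE : C = E := block_eq_of_shared_bot hc hC hE hc₁.1 (hm ▸ he₁.1)
      (fun x hx => hc₁.2 hx) (fun y hy => hm ▸ he₁.2 hy)
    have : cMax = eMax := hc₂.unique (hCE ▸ he₂)
    rw [this]
end
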